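/- Let Γ be a defining graph with vertex set V, and let S₁, S₂ ⊆ V with S₁ ∪ S₂ = V be such that every edge of Γ has both endpoints in S₁ or both endpoints in S₂. Let Γ₁, Γ₂, Γ₀ be the induced labeled subgraphs on S₁, S₂ and S₁ ∩ S₂ respectively. Then A_Γ is the amalgamated free product A_{Γ₁} *_{A_{Γ₀}} A_{Γ₂}: the canonical group homomorphism from the pushout (Mathlib's PushoutI) of the canonical maps A_{Γ₀} → A_{Γ₁} and A_{Γ₀} → A_{Γ₂} to A_Γ, induced by the canonical maps A_{Γ₁} → A_Γ and A_{Γ₂} → A_Γ sending standard generators to standard generators, is a group isomorphism. -/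

import Mathlib

/-- The alternating product `a * b * a * ⋯` with `n` factors. -/
def altProd {M : Type*} [Monoid M] : M → M → ℕ → M
  | _, _, 0 => 1
  | a, b, n + 1 => a * altProd b a n

lemma map_altProd {M N : Type*} [Monoid M] [Monoid N] (φ : M →* N) (a b : M) (n : ℕ) :
    φ (altProd a b n) = altProd (φ a) (φ b) n := by
  induction n generalizing a b with
  | zero => simp [altProd]
  | succ n ih => simp [altProd, ih]

/-- A defining graph: a finite simplicial graph with each edge labelled by a natural
number `≥ 2`. -/
structure DefiningGraph (V : Type*) where
  graph : SimpleGraph V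
  label : V → V → ℕ
  label_symm : ∀ a b, label a b = label b a
  two_le_label : ∀ a b, graph.Adj a b → 2 ≤ label a b

namespace DefiningGraph

variable {V : Type*}

/-- The Artin relations `π(a,b;m_ab) = π(b,a;m_ab)`, one for each edge `{a,b}` of the
defining graph. -/
def rels (Γ : DefiningGraph V) : Set (FreeGroup V) :=
  {r | ∃ a b, Γ.graph.Adj a b ∧
    r = altProd (FreeGroup.of a) (FreeGroup.of b) (Γ.label a b) *
      (altProd (FreeGroup.of b) (FreeGroup.of a) (Γ.label a b))⁻¹}

end DefiningGraph

/-- The Artin group of a defining graph, as a presented group. -/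
abbrev ArtinGroup {V : Type*} (Γ : DefiningGraph V) : Type _ := PresentedGroup Γ.rels

namespace DefiningGraph

variable {V : Type*}

lemma rel_one (Γ : DefiningGraph V) {a b : V} (h : Γ.graph.Adj a b) :
    altProd (PresentedGroup.of a : ArtinGroup Γ) (PresentedGroup.of b) (Γ.label a b) *
      (altProd (PresentedGroup.of b : ArtinGroup Γ) (PresentedGroup.of a) (Γ.label a b))⁻¹
      = 1 := by
  have key : (PresentedGroup.mk Γ.rels) (altProd (FreeGroup.of a) (FreeGroup.of b) (Γ.label a b) *
      (altProd (FreeGroup.of b) (FreeGroup.of a) (Γ.label a b))⁻¹) = 1 := by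
    apply (QuotientGroup.eq_one_iff _).mpr
    exact Subgroup.subset_normalClosure ⟨a, b, h, rfl⟩
  simpa [map_mul, map_inv, map_altProd, PresentedGroup.of] using key

/-- The induced labelled subgraph on a subset `S` of the vertices. -/
def induce (Γ : DefiningGraph V) (S : Set V) : DefiningGraph S where
  graph := Γ.graph.induce S
  label a b := Γ.label a b
  label_symm a b := Γ.label_symm a b
  two_le_label a b h := Γ.two_le_label a b h

/-- The canonical homomorphism between the Artin groups of nested induced subgraphs,
sending standard generators to standard generators. -/
def induceHom (Γ : DefiningGraph V) {S T : Set V} (hST : S ⊆ T) :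
    ArtinGroup (Γ.induce S) →* ArtinGroup (Γ.induce T) :=
  PresentedGroup.toGroup
    (f := fun a : S => (PresentedGroup.of ⟨a.1, hST a.2⟩ : ArtinGroup (Γ.induce T)))
    (by
      rintro r ⟨a, b, hab, rfl⟩
      rw [map_mul, map_inv, map_altProd, map_altProd, FreeGroup.lift_apply_of, FreeGroup.lift_apply_of]
      exact rel_one (Γ.induce T) (hab : Γ.graph.Adj a.1 b.1))

/-- The canonical homomorphism from the Artin group of an induced subgraph to the ambient
Artin group, sending standard generators to standard generators. -/
def inclHom (Γ : DefiningGraph V) (S : Set V) :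
    ArtinGroup (Γ.induce S) →* ArtinGroup Γ :=
  PresentedGroup.toGroup
    (f := fun a : S => (PresentedGroup.of a.1 : ArtinGroup Γ))
    (by
      rintro r ⟨a, b, hab, rfl⟩
      rw [map_mul, map_inv, map_altProd, map_altProd, FreeGroup.lift_apply_of, FreeGroup.lift_apply_of]
      exact rel_one Γ (hab : Γ.graph.Adj a.1 b.1))

end DefiningGraph


section VisualAux

open Monoid

variable {V : Type*} (Γ : DefiningGraph V) (S₁ S₂ : Set V)

/-- The family of maps for the visual splitting pushout. -/
abbrev vsφ : ∀ i : Bool,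
    ArtinGroup (Γ.induce (S₁ ∩ S₂)) →* ArtinGroup (Γ.induce (if i then S₁ else S₂)) :=
  fun i : Bool =>
    Γ.induceHom (S := S₁ ∩ S₂) (T := if i then S₁ else S₂)
      (by cases i
          · exact Set.inter_subset_right
          · exact Set.inter_subset_left)

theorem visual_aux (hcover : S₁ ∪ S₂ = Set.univ)
    (hedges : ∀ a b : V, Γ.graph.Adj a b → (a ∈ S₁ ∧ b ∈ S₁) ∨ (a ∈ S₂ ∧ b ∈ S₂))
    (hφ : ∀ i : Bool, ((fun i : Bool => Γ.inclHom (if i then S₁ else S₂)) i).comp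
      (vsφ Γ S₁ S₂ i) = Γ.inclHom (S₁ ∩ S₂)) :
    Function.Bijective
      (Monoid.PushoutI.lift (φ := vsφ Γ S₁ S₂) (fun i : Bool => Γ.inclHom (if i then S₁ else S₂))
        (Γ.inclHom (S₁ ∩ S₂)) hφ) := by
  classical
  set L := Monoid.PushoutI.lift (φ := vsφ Γ S₁ S₂)
    (fun i : Bool => Γ.inclHom (if i then S₁ else S₂)) (Γ.inclHom (S₁ ∩ S₂)) hφ with hLdef
  -- the candidate inverse on generators
  let f : V → Monoid.PushoutI (vsφ Γ S₁ S₂) := fun v =>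
    if h : v ∈ S₁ then Monoid.PushoutI.of (φ := vsφ Γ S₁ S₂) true (PresentedGroup.of ⟨v, h⟩)
    else Monoid.PushoutI.of (φ := vsφ Γ S₁ S₂) false
      (PresentedGroup.of ⟨v, ((hcover.symm ▸ Set.mem_univ v : v ∈ S₁ ∪ S₂)).resolve_left h⟩)
  have key1 : ∀ (v : V) (h : v ∈ S₁),
      f v = Monoid.PushoutI.of (φ := vsφ Γ S₁ S₂) true (PresentedGroup.of ⟨v, h⟩) := by
    intro v h
    simp only [f, dif_pos h]
  have key2 : ∀ (v : V) (h : v ∈ S₂),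
      f v = Monoid.PushoutI.of (φ := vsφ Γ S₁ S₂) false (PresentedGroup.of ⟨v, h⟩) := by
    intro v h
    by_cases h1 : v ∈ S₁
    · have hv : v ∈ S₁ ∩ S₂ := ⟨h1, h⟩
      have e1 : vsφ Γ S₁ S₂ true (PresentedGroup.of ⟨v, hv⟩) = PresentedGroup.of ⟨v, h1⟩ := by
        simp [DefiningGraph.induceHom, PresentedGroup.toGroup.of]
      have e2 : vsφ Γ S₁ S₂ false (PresentedGroup.of ⟨v, hv⟩) = PresentedGroup.of ⟨v, h⟩ := by
        simp [DefiningGraph.induceHom, PresentedGroup.toGroup.of]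
      simp only [f, dif_pos h1]
      rw [← e1, ← e2, Monoid.PushoutI.of_apply_eq_base, Monoid.PushoutI.of_apply_eq_base]
    · simp only [f, dif_neg h1]
  have hrel : ∀ r ∈ Γ.rels, FreeGroup.lift f r = 1 := by
    rintro r ⟨a, b, hab, rfl⟩
    rcases hedges a b hab with ⟨ha, hb⟩ | ⟨ha, hb⟩
    · rw [map_mul, map_inv, map_altProd, map_altProd, FreeGroup.lift_apply_of, FreeGroup.lift_apply_of,
        key1 a ha, key1 b hb,
        ← map_altProd (Monoid.PushoutI.of (φ := vsφ Γ S₁ S₂) true),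
        ← map_altProd (Monoid.PushoutI.of (φ := vsφ Γ S₁ S₂) true), ← map_inv, ← map_mul]
      have h1 : altProd (PresentedGroup.of ⟨a, ha⟩ : ArtinGroup (Γ.induce S₁))
          (PresentedGroup.of ⟨b, hb⟩) (Γ.label a b) *
          (altProd (PresentedGroup.of ⟨b, hb⟩ : ArtinGroup (Γ.induce S₁))
            (PresentedGroup.of ⟨a, ha⟩) (Γ.label a b))⁻¹ = 1 :=
        (Γ.induce S₁).rel_one (a := ⟨a, ha⟩) (b := ⟨b, hb⟩) hab
      rw [h1, map_one]
    · rw [map_mul, map_inv, map_altProd, map_altProd, FreeGroup.lift_apply_of, FreeGroup.lift_apply_of,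
        key2 a ha, key2 b hb,
        ← map_altProd (Monoid.PushoutI.of (φ := vsφ Γ S₁ S₂) false),
        ← map_altProd (Monoid.PushoutI.of (φ := vsφ Γ S₁ S₂) false), ← map_inv, ← map_mul]
      have h1 : altProd (PresentedGroup.of ⟨a, ha⟩ : ArtinGroup (Γ.induce S₂))
          (PresentedGroup.of ⟨b, hb⟩) (Γ.label a b) *
          (altProd (PresentedGroup.of ⟨b, hb⟩ : ArtinGroup (Γ.induce S₂))
            (PresentedGroup.of ⟨a, ha⟩) (Γ.label a b))⁻¹ = 1 :=
        (Γ.induce S₂).rel_one (a := ⟨a, ha⟩) (b := ⟨b, hb⟩) hab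
      rw [h1, map_one]
  let g : ArtinGroup Γ →* Monoid.PushoutI (vsφ Γ S₁ S₂) := PresentedGroup.toGroup hrel
  have hg : ∀ v : V, g (PresentedGroup.of v) = f v := fun v => PresentedGroup.toGroup.of hrel
  have hLg : L.comp g = MonoidHom.id _ := by
    apply PresentedGroup.ext
    intro v
    simp only [MonoidHom.comp_apply, MonoidHom.id_apply, hg]
    by_cases h : v ∈ S₁
    · rw [key1 v h, hLdef, Monoid.PushoutI.lift_of]
      simp [DefiningGraph.inclHom, PresentedGroup.toGroup.of]
    · have h2 : v ∈ S₂ := ((hcover.symm ▸ Set.mem_univ v : v ∈ S₁ ∪ S₂)).resolve_left h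
      rw [key2 v h2, hLdef, Monoid.PushoutI.lift_of]
      simp [DefiningGraph.inclHom, PresentedGroup.toGroup.of]
  have hgL : g.comp L = MonoidHom.id _ := by
    apply Monoid.PushoutI.hom_ext_nonempty
    intro i
    apply PresentedGroup.ext
    intro x
    simp only [MonoidHom.comp_apply, MonoidHom.id_apply]
    rw [hLdef, Monoid.PushoutI.lift_of]
    cases i
    · have : (Γ.inclHom (if false = true then S₁ else S₂)) (PresentedGroup.of x) =
          PresentedGroup.of x.1 := by
        simp [DefiningGraph.inclHom, PresentedGroup.toGroup.of]
      rw [this, hg, key2 x.1 x.2]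
    · have : (Γ.inclHom (if true = true then S₁ else S₂)) (PresentedGroup.of x) =
          PresentedGroup.of x.1 := by
        simp [DefiningGraph.inclHom, PresentedGroup.toGroup.of]
      rw [this, hg, key1 x.1 x.2]
  exact Function.bijective_iff_has_inverse.mpr
    ⟨g, fun x => DFunLike.congr_fun hgL x, fun x => DFunLike.congr_fun hLg x⟩

end VisualAux

/-- **Visual splittings.** If `S₁ ∪ S₂ = V` and every edge of `Γ` has both endpoints in `S₁`
or both endpoints in `S₂`, then `A_Γ` is the amalgamated product `A_{Γ₁} *_{A_{Γ₀}} A_{Γ₂}`,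
where `Γ₁, Γ₂, Γ₀` are the induced subgraphs on `S₁`, `S₂` and `S₁ ∩ S₂`: the canonical
homomorphism from the pushout of `A_{Γ₀} → A_{Γ₁}` and `A_{Γ₀} → A_{Γ₂}` to `A_Γ` is a group
isomorphism. -/
theorem visual_splitting_bijective {V : Type*} [Fintype V] (Γ : DefiningGraph V)
    (S₁ S₂ : Set V) (hcover : S₁ ∪ S₂ = Set.univ)
    (hedges : ∀ a b : V, Γ.graph.Adj a b → (a ∈ S₁ ∧ b ∈ S₁) ∨ (a ∈ S₂ ∧ b ∈ S₂)) :
    Function.Bijective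
      (Monoid.PushoutI.lift
        (φ := fun i : Bool =>
          Γ.induceHom (S := S₁ ∩ S₂) (T := if i then S₁ else S₂)
            (by cases i
                · exact Set.inter_subset_right
                · exact Set.inter_subset_left))
        (fun i : Bool => Γ.inclHom (if i then S₁ else S₂))
        (Γ.inclHom (S₁ ∩ S₂))
        (by
          intro i
          ext x
          cases i <;>
            simp [DefiningGraph.induceHom, DefiningGraph.inclHom,
              PresentedGroup.toGroup.of, MonoidHom.comp_apply])) := by
  exact visual_aux Γ S₁ S₂ hcover hedges _
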